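/- arXiv:2510.26137 — 3 statements merged into one kernel-verified Lean document; each statement's English description precedes it below -/
import Mathlib

section
/- For every fixed integer n ≥ 2 and fixed integers i_1,…,i_{n−1} ≥ 1, there exist polynomials p, q ∈ ℚ[x] with q ≠ 0 and an integer g₀ such that for every integer g ≥ g₀ one has q(g) ≠ 0 and 𝒢^rg(g) = p(g)/q(g); i.e., 𝒢^rg(g) is a rational function of g for large g. -/
/-- Double factorial on naturals: `0!! = 1`, `1!! = 1`, `(k+2)!! = (k+2)·k!!`. -/
def df : ℕ → ℕ
  | 0 => 1
  | 1 => 1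
  | k + 2 => (k + 2) * df k

/-- Double factorial of an integer, with `z!! = 1` for `z ≤ 0` (so `(-1)!! = 0!! = 1`). -/
def dfacZ (z : ℤ) : ℤ := if z ≤ 0 then 1 else (df z.toNat : ℤ)

/-- The matrices `L_k`. -/
noncomputable def Lmat (k : ℕ) : Matrix (Fin 2) (Fin 2) ℝ :=
  if k = 0 then !![1, 0; 0, 0]
  else if k % 2 = 0 then !![(df (k - 1) : ℝ), 0; 0, -(df (k - 1) : ℝ)]
  else !![0, -(df k : ℝ); (df (k - 2) : ℝ), 0]

/-- `l_{k_1,…,k_m} = tr(L_{k_1}⋯L_{k_m})` if all indices are nonnegative, else `0`. -/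
noncomputable def lSeq (m : ℕ) (k : Fin m → ℤ) : ℝ :=
  if ∀ q, 0 ≤ k q then Matrix.trace ((List.ofFn fun q => Lmat (k q).toNat).prod) else 0

/-- The matrices `B_k`, with entries in `ℚ[N]`. -/
noncomputable def Bmat (k : ℕ) : Matrix (Fin 2) (Fin 2) (Polynomial ℚ) :=
  if k = 0 then !![1, 0; 0, 0]
  else if k % 2 = 0 then
    !![Polynomial.C ((df (k - 1) : ℚ) * (1 + (-1 : ℚ) ^ ((k - 2) / 2)) / (k : ℚ)) * Polynomial.X, 0;
       0, -(Polynomial.C ((df (k - 1) : ℚ) * (1 + (-1 : ℚ) ^ ((k - 2) / 2)) / (k : ℚ)) * Polynomial.X)]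
  else
    !![0, -(Polynomial.C ((df (k - 2) : ℚ)) * Polynomial.X);
       Polynomial.C ((df (k - 2) : ℚ) * (-1 : ℚ) ^ ((k - 1) / 2)), 0]

/-- `b_{k_1,…,k_m} = [N^1] tr(B_{k_1}⋯B_{k_m})` if all indices are nonnegative, else `0`. -/
noncomputable def bSeq (m : ℕ) (k : Fin m → ℤ) : ℚ :=
  if ∀ q, 0 ≤ k q then (Matrix.trace ((List.ofFn fun q => Bmat (k q).toNat).prod)).coeff 1 else 0

/-- `J_{σ,q}(j)`: `-j-1` if `σ(q) < σ(q+1)`, and `j` if `σ(q) > σ(q+1)` (indices cyclic). -/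
def Jfun {m : ℕ} [NeZero m] (σ : Equiv.Perm (Fin m)) (q : Fin m) (j : ℕ) : ℤ :=
  if σ q < σ (q + 1) then -(j : ℤ) - 1 else (j : ℤ)

/-- `K_{i,σ,q}(j) = i_{σ(q)} + J_{σ,q}(j_q) − J_{σ,q−1}(j_{q−1})`, indices cyclic. -/
def Kfun {m : ℕ} [NeZero m] (i : Fin m → ℤ) (σ : Equiv.Perm (Fin m)) (j : Fin m → ℕ)
    (q : Fin m) : ℤ :=
  i (σ q) + Jfun σ q (j q) - Jfun σ (q - 1) (j (q - 1))

/-- `m(σ) = #{q : σ(q+1) < σ(q)}` (indices cyclic). -/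
def mcount {m : ℕ} [NeZero m] (σ : Equiv.Perm (Fin m)) : ℕ :=
  (Finset.univ.filter fun q : Fin m => σ (q + 1) < σ q).card

/-- The normalized enumeration `𝒢^og` of ordinary graphs, via Lemma 2.2:
`𝒢^og(g) = (1/(m·(2g+2m−3)!!)) Σ_σ (−1)^{m(σ)+1} Σ_j l_{K_{i,σ,1}(j),…,K_{i,σ,m}(j)}`. -/
noncomputable def Gog (m : ℕ) [NeZero m] (i : Fin m → ℤ) (g : ℤ) : ℝ :=
  (1 / ((m : ℝ) * (dfacZ (2 * g + 2 * m - 3) : ℝ))) *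
    ∑ σ : Equiv.Perm (Fin m), (-1 : ℝ) ^ (mcount σ + 1) *
      ∑' j : Fin m → ℕ, lSeq m (Kfun i σ j)

/-- The normalized enumeration `𝒢^rg` of ribbon graphs with one face, via Lemma 3.1:
`𝒢^rg(g) = (1/(2m·(4g+2m−5)!!)) Σ_σ (−1)^{m(σ)+1} Σ_j b_{K_{i,σ,1}(j),…,K_{i,σ,m}(j)}`. -/
noncomputable def Grg (m : ℕ) [NeZero m] (i : Fin m → ℤ) (g : ℤ) : ℝ :=
  (1 / (2 * (m : ℝ) * (dfacZ (4 * g + 2 * m - 5) : ℝ))) *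
    ∑ σ : Equiv.Perm (Fin m), (-1 : ℝ) ^ (mcount σ + 1) *
      ∑' j : Fin m → ℕ, ((bSeq m (Kfun i σ j) : ℚ) : ℝ)

/-- `σ ∈ S_{n+2}^{(r,n+2−r)}`: unimodal permutations of `{0,…,n+1}` fixing the last point,
strictly decreasing on positions `0,…,n+1−r` down to the value `0`, then strictly increasing
on positions `n+1−r,…,n+1` up to the value `n+1`. -/
def SPerm (n r : ℕ) (σ : Equiv.Perm (Fin (n + 2))) : Prop :=
  σ (Fin.last (n + 1)) = Fin.last (n + 1) ∧
  σ ⟨n + 1 - r, by omega⟩ = ⟨0, by omega⟩ ∧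
  (∀ a b : Fin (n + 2), a < b → b.val ≤ n + 1 - r → σ b < σ a) ∧
  (∀ a b : Fin (n + 2), n + 1 - r ≤ a.val → a < b → σ a < σ b)

/-- `σ ∈ S_{n+2}^{{2}} = ∪_{r=1}^{n+1} S_{n+2}^{(r,n+2−r)}`. -/
def inS2 (n : ℕ) (σ : Equiv.Perm (Fin (n + 2))) : Prop :=
  ∃ r, 1 ≤ r ∧ r ≤ n + 1 ∧ SPerm n r σ

open Polynomial

lemma df_pos : ∀ k, 0 < df k
  | 0 => by simp [df]
  | 1 => by simp [df]
  | (k+2) => by rw [df]; exact Nat.mul_pos (by omega) (df_pos k)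

lemma dfacZ_pos (z : ℤ) : 0 < dfacZ z := by
  unfold dfacZ; split
  · exact one_pos
  · exact_mod_cast df_pos _

lemma dfacZ_eq_df (z : ℤ) (h : 0 ≤ z) : dfacZ z = (df z.toNat : ℤ) := by
  unfold dfacZ; split
  · have : z = 0 := le_antisymm (by assumption) h
    subst this; simp [df]
  · rfl

lemma dfacZ_step (z : ℤ) (h : 1 ≤ z) : dfacZ z = z * dfacZ (z - 2) := by
  rcases eq_or_lt_of_le h with h1 | h1
  · rw [← h1]; norm_num [dfacZ, df]
  rcases eq_or_lt_of_le (show (2:ℤ) ≤ z by omega) with h2 | h2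
  · rw [← h2]; norm_num [dfacZ]; decide
  · have h3 : (3:ℤ) ≤ z := by omega
    rw [dfacZ_eq_df z (by omega), dfacZ_eq_df (z-2) (by omega)]
    have : z.toNat = (z-2).toNat + 2 := by omega
    rw [this, df]
    push_cast
    have : ((z-2).toNat : ℤ) = z - 2 := by omega
    rw [this]
    ring

/-- eventually a rational function -/
def EvRat (f : ℤ → ℝ) : Prop :=
  ∃ p q : Polynomial ℚ, ∃ g₀ : ℤ, q ≠ 0 ∧ ∀ g : ℤ, g₀ ≤ g →
    Polynomial.eval (g : ℚ) q ≠ 0 ∧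
    f g = ((Polynomial.eval (g:ℚ) p : ℚ) : ℝ) / ((Polynomial.eval (g:ℚ) q : ℚ) : ℝ)

lemma evRat_zero : EvRat (fun _ => 0) :=
  ⟨0, 1, 0, one_ne_zero, fun g _ => by simp⟩

lemma EvRat.add {f f' : ℤ → ℝ} (h : EvRat f) (h' : EvRat f') :
    EvRat (fun g => f g + f' g) := by
  obtain ⟨p, q, g₀, hq, H⟩ := h
  obtain ⟨p', q', g₀', hq', H'⟩ := h'
  refine ⟨p * q' + p' * q, q * q', max g₀ g₀', mul_ne_zero hq hq', fun g hg => ?_⟩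
  obtain ⟨h1, h2⟩ := H g (le_trans (le_max_left _ _) hg)
  obtain ⟨h1', h2'⟩ := H' g (le_trans (le_max_right _ _) hg)
  refine ⟨by simp [h1, h1'], ?_⟩
  show f g + f' g = _
  rw [h2, h2']
  push_cast
  field_simp
  simp only [Polynomial.eval_mul, Polynomial.eval_add, Rat.cast_mul, Rat.cast_add]
  ring

lemma EvRat.congr {f f' : ℤ → ℝ} (h : EvRat f) (he : ∀ g, f g = f' g) : EvRat f' := by
  obtain ⟨p, q, g₀, hq, H⟩ := h
  exact ⟨p, q, g₀, hq, fun g hg => (he g) ▸ H g hg⟩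

lemma evRat_sum {ι : Type*} (s : Finset ι) (F : ι → ℤ → ℝ)
    (h : ∀ x ∈ s, EvRat (F x)) : EvRat (fun g => ∑ x ∈ s, F x g) := by
  classical
  induction s using Finset.induction_on with
  | empty => simpa using evRat_zero
  | insert _ _ hx ih =>
      simp only [Finset.sum_insert hx]
      exact (h _ (Finset.mem_insert_self _ _)).add (ih fun x hxs => h x (Finset.mem_insert_of_mem hxs))

lemma dfac_pow_ratio (b : ℤ) : ∀ k : ℕ, ∃ p : Polynomial ℚ, ∃ g₀ : ℤ, ∀ g : ℤ, g₀ ≤ g →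
    Polynomial.eval (g:ℚ) p ≠ 0 ∧
    ((dfacZ (4*g + (b + 2*k)) : ℤ) : ℚ) = Polynomial.eval (g:ℚ) p * ((dfacZ (4*g + b) : ℤ) : ℚ)
  | 0 => ⟨1, 0, fun g _ => by norm_num⟩
  | (k+1) => by
      obtain ⟨p, g₀, hp⟩ := dfac_pow_ratio b k
      refine ⟨(C 4 * X + C ((b:ℚ) + 2*k + 2)) * p, max g₀ (|b| + 2*(k:ℤ) + 3), fun g hg => ?_⟩
      have hg₀ : g₀ ≤ g := le_trans (le_max_left _ _) hg
      have hgb : |b| + 2*(k:ℤ) + 3 ≤ g := le_trans (le_max_right _ _) hg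
      obtain ⟨hpne, hpeq⟩ := hp g hg₀
      have hb1 : -|b| ≤ b := neg_abs_le b
      have hb0 : 0 ≤ |b| := abs_nonneg b
      have hz : (1:ℤ) ≤ 4*g + (b + 2*k) + 2 := by omega
      have hstep := dfacZ_step (4*g + (b + 2*k) + 2) hz
      have harg : 4*g + (b + 2*(k+1:ℕ)) = 4*g + (b + 2*k) + 2 := by push_cast; ring
      have hlin : (4:ℚ)*g + ((b:ℚ) + 2*k + 2) ≠ 0 := by
        have hlt : (0:ℤ) < 4*g + (b + 2*k) + 2 := by omega
        have : (0:ℚ) < ((4*g + (b + 2*(k:ℤ)) + 2 : ℤ) : ℚ) := by exact_mod_cast hlt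
        push_cast at this
        linarith
      constructor
      · rw [Polynomial.eval_mul]
        refine mul_ne_zero ?_ hpne
        simpa using hlin
      · rw [harg, hstep]
        rw [show 4*g + (b + 2*(k:ℤ)) + 2 - 2 = 4*g + (b + 2*(k:ℤ)) from by ring]
        push_cast only [Int.cast_mul]
        rw [hpeq]
        simp only [Polynomial.eval_mul, Polynomial.eval_add, Polynomial.eval_C,
          Polynomial.eval_mul, Polynomial.eval_X]
        push_cast
        ring

lemma dfac_ratio (a b : ℤ) (hpar : a % 2 = b % 2) :
    ∃ p q : Polynomial ℚ, ∃ g₀ : ℤ, q ≠ 0 ∧ ∀ g : ℤ, g₀ ≤ g →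
      Polynomial.eval (g:ℚ) q ≠ 0 ∧
      ((dfacZ (4*g + a) : ℤ) : ℚ) * Polynomial.eval (g:ℚ) q
        = ((dfacZ (4*g + b) : ℤ) : ℚ) * Polynomial.eval (g:ℚ) p := by
  rcases le_total b a with hle | hle
  · obtain ⟨k, hk⟩ : ∃ k : ℕ, a = b + 2*(k:ℤ) := ⟨((a-b)/2).toNat, by omega⟩
    obtain ⟨p, g₀, hp⟩ := dfac_pow_ratio b k
    refine ⟨p, 1, g₀, one_ne_zero, fun g hg => ?_⟩
    obtain ⟨hpne, hpeq⟩ := hp g hg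
    refine ⟨by simp, ?_⟩
    rw [hk]
    simp only [Polynomial.eval_one, mul_one]
    rw [hpeq]; ring
  · obtain ⟨k, hk⟩ : ∃ k : ℕ, b = a + 2*(k:ℤ) := ⟨((b-a)/2).toNat, by omega⟩
    obtain ⟨q, g₀, hq⟩ := dfac_pow_ratio a k
    have hqne0 : q ≠ 0 := by
      intro h0
      have := (hq g₀ le_rfl).1
      rw [h0] at this; simp at this
    refine ⟨1, q, g₀, hqne0, fun g hg => ?_⟩
    obtain ⟨hqne, hqeq⟩ := hq g hg
    refine ⟨hqne, ?_⟩
    rw [hk]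
    simp only [Polynomial.eval_one, mul_one]
    rw [hqeq]; ring

lemma Bmat_odd (k : ℕ) (hk : k % 2 = 1) :
    Bmat k = (df (k - 2) : ℚ) •
      !![0, -(X : Polynomial ℚ); C ((-1:ℚ) ^ ((k - 1) / 2)), 0] := by
  unfold Bmat
  rw [if_neg (by omega), if_neg (by omega)]
  ext a b
  fin_cases a <;> fin_cases b <;>
    simp [Polynomial.smul_eq_C_mul, ← Polynomial.C_mul] <;> ring_nf

lemma Bmat_even (k : ℕ) (hk : k % 2 = 0) (h0 : k ≠ 0) :
    Bmat k = ((df (k - 1) : ℚ) * (1 + (-1:ℚ) ^ ((k - 2) / 2)) / (k : ℚ)) •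
      !![(X : Polynomial ℚ), 0; 0, -X] := by
  unfold Bmat
  rw [if_neg h0, if_pos hk]
  ext a b
  fin_cases a <;> fin_cases b <;>
    simp [Polynomial.smul_eq_C_mul] <;> ring_nf

lemma ofFn_prod_smul : ∀ (n : ℕ) (c : Fin n → ℚ)
    (A : Fin n → Matrix (Fin 2) (Fin 2) (Polynomial ℚ)),
    (List.ofFn fun q => c q • A q).prod = (∏ q, c q) • (List.ofFn A).prod
  | 0, c, A => by simp
  | (n+1), c, A => by
      rw [List.ofFn_succ, List.ofFn_succ, List.prod_cons, List.prod_cons,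
        ofFn_prod_smul n _ _, Fin.prod_univ_succ, Matrix.smul_mul, Matrix.mul_smul,
        smul_smul]

open Fin.NatCast Fin.CommRing in
lemma j_bound (m : ℕ) (iv : Fin (m+2) → ℤ) (I : ℤ) (hI : 0 ≤ I)
    (hb : ∀ v : Fin (m+2), v ≠ Fin.last (m+1) → iv v ≤ I)
    (σ : Equiv.Perm (Fin (m+2))) (j : Fin (m+2) → ℕ)
    (h : ∀ q, 0 ≤ Kfun iv σ j q) :
    ∀ q, (j q : ℤ) ≤ ((m:ℤ)+2) * I := by
  set L : Fin (m+2) := Fin.last (m+1) with hLdef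
  set qs : Fin (m+2) := σ.symm L with hqsdef
  have hσqs : σ qs = L := σ.apply_symm_apply L
  set T : ℕ → ℤ := fun s => Jfun σ (qs + (s : Fin (m+2))) (j (qs + (s : Fin (m+2)))) with hT
  have hne0 : ∀ s : ℕ, 1 ≤ s → s ≤ m+1 → ((s : Fin (m+2)) : ℕ) = s := by
    intro s h1 h2
    rw [Fin.val_natCast]
    exact Nat.mod_eq_of_lt (by omega)
  have hqeq_of : ∀ q : Fin (m+2), σ q = L → q = qs := by
    intro q hq
    rw [hqsdef, ← hq, Equiv.symm_apply_apply]
  have hqadd_ne : ∀ s : ℕ, 1 ≤ s → s ≤ m+1 → qs + (s : Fin (m+2)) ≠ qs := by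
    intro s h1 h2 hq
    have : (s : Fin (m+2)) = 0 := by
      have := add_eq_left.mp hq
      exact this
    have := congrArg Fin.val this
    rw [hne0 s h1 h2] at this
    simp at this
    omega
  have hconstraint : ∀ s : ℕ, 1 ≤ s → s ≤ m+1 → T (s-1) ≤ I + T s := by
    intro s h1 h2
    have hq := h (qs + (s : Fin (m+2)))
    rw [Kfun] at hq
    have hsub : qs + (s : Fin (m+2)) - 1 = qs + ((s-1 : ℕ) : Fin (m+2)) := by
      have hcast : (s : Fin (m+2)) = ((s-1 : ℕ) : Fin (m+2)) + 1 := by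
        conv_lhs => rw [show s = (s-1)+1 from by omega]
        push_cast
        ring
      rw [hcast, ← add_assoc, add_sub_cancel_right]
    rw [hsub] at hq
    have hσne : σ (qs + (s : Fin (m+2))) ≠ L := by
      intro hE
      exact hqadd_ne s h1 h2 (hqeq_of _ hE)
    have hivle : iv (σ (qs + (s : Fin (m+2)))) ≤ I := hb _ hσne
    simp only [hT]
    omega
  have hchain : ∀ d s : ℕ, s + d ≤ m+1 → T s ≤ (d:ℤ) * I + T (s + d) := by
    intro d
    induction d with
    | zero => intro s _; simp
    | succ d ih =>
        intro s hs
        have h1 := ih s (by omega)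
        have h2 := hconstraint (s + d + 1) (by omega) (by omega)
        rw [show s + d + 1 - 1 = s + d from by omega] at h2
        rw [show s + (d+1) = s + d + 1 from by omega]
        push_cast
        linarith
  have hT0 : T 0 = (j qs : ℤ) := by
    have h0 : ((0:ℕ) : Fin (m+2)) = 0 := by simp
    simp only [hT, h0, add_zero, Jfun]
    rw [if_neg]
    rw [hσqs]
    exact not_lt.mpr (Fin.le_last _)
  have hTlast : T (m+1) ≤ -1 := by
    have hconv : (((m+1 : ℕ)) : Fin (m+2)) + 1 = 0 := by
      rw [show (((m+1:ℕ)) : Fin (m+2)) + 1 = ((m+2 : ℕ) : Fin (m+2)) from by push_cast; ring,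
        Fin.natCast_self]
    have hq'1 : (qs + ((m+1:ℕ) : Fin (m+2))) + 1 = qs := by
      rw [add_assoc, hconv, add_zero]
    have hq'ne : qs + ((m+1:ℕ):Fin (m+2)) ≠ qs := hqadd_ne (m+1) (by omega) le_rfl
    have hlt : σ (qs + ((m+1:ℕ):Fin (m+2))) < σ ((qs + ((m+1:ℕ):Fin (m+2))) + 1) := by
      rw [hq'1, hσqs]
      refine lt_of_le_of_ne (Fin.le_last _) ?_
      intro hE
      exact hq'ne (hqeq_of _ hE)
    simp only [hT, Jfun, if_pos hlt]
    omega
  have hTlow : ∀ s : ℕ, s ≤ m+1 → -(((m:ℤ)+1)) * I ≤ T s := by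
    intro s hs
    have h1 := hchain s 0 (by omega)
    rw [zero_add] at h1
    have h2 : (0:ℤ) ≤ j qs := by positivity
    have h3 : (s:ℤ) * I ≤ ((m:ℤ)+1) * I := by
      have : (s:ℤ) ≤ (m:ℤ)+1 := by exact_mod_cast hs
      exact mul_le_mul_of_nonneg_right this hI
    rw [hT0] at h1
    linarith
  have hThigh : ∀ s : ℕ, s ≤ m+1 → T s ≤ ((m:ℤ)+1) * I - 1 := by
    intro s hs
    have h1 := hchain (m+1-s) s (by omega)
    rw [show s + (m+1-s) = m+1 from by omega] at h1
    have h3 : ((m+1-s : ℕ):ℤ) * I ≤ ((m:ℤ)+1) * I := by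
      have : ((m+1-s : ℕ):ℤ) ≤ (m:ℤ)+1 := by push_cast; omega
      exact mul_le_mul_of_nonneg_right this hI
    linarith [hTlast]
  intro q
  set s : ℕ := ((q - qs : Fin (m+2)) : ℕ) with hs
  have hsle : s ≤ m+1 := by
    have := (q - qs).isLt
    omega
  have hqeq : qs + (s : Fin (m+2)) = q := by
    rw [hs, Fin.cast_val_eq_self]
    exact add_sub_cancel qs q
  have hTs : T s = Jfun σ q (j q) := by simp only [hT, hqeq]
  have hlow := hTlow s hsle
  have hhigh := hThigh s hsle
  rw [hTs] at hlow hhigh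
  unfold Jfun at hlow hhigh
  by_cases hcond : σ q < σ (q + 1)
  · rw [if_pos hcond] at hlow
    nlinarith
  · rw [if_neg hcond] at hhigh
    nlinarith


lemma helper_div (a b x y : ℚ) (ha : a ≠ 0) (hb : b ≠ 0) (h : x * b = y * a) :
    1 / a * x = y / b := by
  field_simp
  linear_combination h

set_option maxHeartbeats 1600000 in
open Polynomial in
lemma per_term (m : ℕ) (i : Fin (m + 1) → ℤ) (A : ℤ)
    (σ : Equiv.Perm (Fin (m + 2))) (j : Fin (m + 2) → ℕ) :
    EvRat (fun g : ℤ =>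
      1 / (2 * ((m + 2 : ℕ) : ℝ) * ((dfacZ (4 * g + 2 * ((m + 2 : ℕ) : ℤ) - 5) : ℤ) : ℝ)) *
        ((-1 : ℝ) ^ (mcount σ + 1) *
          ((bSeq (m + 2) (Kfun (Fin.snoc i (4 * g + A)) σ j) : ℚ) : ℝ))) := by
  classical
  set L : Fin (m + 2) := Fin.last (m + 1) with hLdef
  set qs : Fin (m + 2) := σ.symm L with hqsdef
  have hσqs : σ qs = L := σ.apply_symm_apply L
  set k₀ : Fin (m + 2) → ℤ := fun q => Kfun (Fin.snoc i A) σ j q with hk₀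
  have hKdec : ∀ (g : ℤ) (q), Kfun (Fin.snoc i (4 * g + A)) σ j q
      = k₀ q + (if q = qs then 4 * g else 0) := by
    intro g q
    have hsnoc : (Fin.snoc i (4 * g + A) : Fin (m + 2) → ℤ) (σ q)
        = (Fin.snoc i A : Fin (m + 2) → ℤ) (σ q) + (if q = qs then 4 * g else 0) := by
      by_cases hq : q = qs
      · rw [hq, hσqs, if_pos rfl, hLdef]
        rw [Fin.snoc_last, Fin.snoc_last]; ring
      · have hne : σ q ≠ L := by
          intro hE; exact hq (by rw [hqsdef, ← hE, Equiv.symm_apply_apply])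
        obtain ⟨p, hp⟩ := Fin.exists_castSucc_eq.mpr hne
        rw [if_neg hq, add_zero, ← hp, Fin.snoc_castSucc, Fin.snoc_castSucc]
    simp only [Kfun, hk₀]
    rw [hsnoc]; ring
  by_cases hpos : ∀ q, q ≠ qs → 0 ≤ k₀ q
  swap
  · push_neg at hpos
    obtain ⟨q, hq, hqneg⟩ := hpos
    refine ⟨0, 1, 0, one_ne_zero, fun g _ => ⟨by simp, ?_⟩⟩
    have hz : bSeq (m + 2) (Kfun (Fin.snoc i (4 * g + A)) σ j) = 0 := by
      rw [bSeq, if_neg]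
      intro hall
      have := hall q
      rw [hKdec g q, if_neg hq, add_zero] at this
      omega
    show _ * (_ * ((bSeq (m + 2) (Kfun (Fin.snoc i (4 * g + A)) σ j) : ℚ) : ℝ)) = _
    rw [hz]; simp
  · set c : ℤ := k₀ qs with hc
    set g₀ : ℤ := |c| + 1 with hg₀
    have hg2 : ∀ g : ℤ, g₀ ≤ g → 2 ≤ 4 * g + c := by
      intro g hg
      have h1 : -|c| ≤ c := neg_abs_le c
      have h0 : 0 ≤ |c| := abs_nonneg c
      omega
    have hkg : ∀ g : ℤ, g₀ ≤ g → (((4 * g + c).toNat : ℤ)) = 4 * g + c := fun g hg =>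
      Int.toNat_of_nonneg (by have := hg2 g hg; omega)
    have hKall : ∀ g : ℤ, g₀ ≤ g → ∀ q, 0 ≤ Kfun (Fin.snoc i (4 * g + A)) σ j q := by
      intro g hg q
      rw [hKdec g q]
      by_cases hq : q = qs
      · rw [if_pos hq, hq]
        have h2 := hg2 g hg
        have h3 : k₀ qs = c := hc.symm
        rw [h3]
        linarith
      · rw [if_neg hq, add_zero]
        exact hpos q hq
    have hbSeq : ∀ g : ℤ, g₀ ≤ g → (bSeq (m + 2) (Kfun (Fin.snoc i (4 * g + A)) σ j) : ℚ)
        = (Matrix.trace ((List.ofFn fun q =>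
            Bmat (if q = qs then (4 * g + c).toNat else (k₀ q).toNat)).prod)).coeff 1 := by
      intro g hg
      have hfun : (fun q => Bmat ((Kfun (Fin.snoc i (4 * g + A)) σ j q).toNat))
          = fun q => Bmat (if q = qs then (4 * g + c).toNat else (k₀ q).toNat) := by
        funext q
        rw [hKdec g q]
        by_cases hq : q = qs
        · rw [if_pos hq, if_pos hq, hq]
          have h3 : k₀ qs + 4 * g = 4 * g + c := by rw [hc]; ring
          rw [h3]
        · rw [if_neg hq, if_neg hq, add_zero]
      rw [bSeq, if_pos (hKall g hg), hfun]
    set sq : ℚ := (-1 : ℚ) ^ (mcount σ + 1) with hsqdef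
    have hsqcast : ∀ x : ℚ, ((-1 : ℝ)) ^ (mcount σ + 1) * ((x : ℚ) : ℝ) = ((sq * x : ℚ) : ℝ) := by
      intro x; rw [hsqdef]; push_cast; ring
    have hDne : ∀ g : ℤ, ((dfacZ (4*g + 2*((m+2:ℕ):ℤ) - 5) : ℤ) : ℚ) ≠ 0 := by
      intro g; exact_mod_cast (dfacZ_pos _).ne'
    have hm2 : ((m+2:ℕ):ℚ) ≠ 0 := by
      exact_mod_cast (by omega : (m+2:ℕ) ≠ 0)
    by_cases hcpar : c % 2 = 0
    · -- c even
      set e : ℚ := (-1 : ℚ) ^ (((4*g₀+c).toNat - 2) / 2) with he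
      have hsign : ∀ g : ℤ, g₀ ≤ g → (-1 : ℚ) ^ (((4*g+c).toNat - 2) / 2) = e := by
        intro g hg
        have h1 := hkg g hg
        have h2 := hkg g₀ le_rfl
        have hd : (((g - g₀).toNat : ℤ)) = g - g₀ := Int.toNat_of_nonneg (by omega)
        have hge := hg2 g₀ le_rfl
        have h5 : ((4*g+c).toNat - 2) / 2 = ((4*g₀+c).toNat - 2) / 2 + 2 * (g - g₀).toNat := by
          omega
        rw [h5, pow_add, pow_mul, he]
        norm_num
      have hBe : ∀ g : ℤ, g₀ ≤ g → Bmat ((4*g+c).toNat)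
          = ((df ((4*g+c).toNat - 1) : ℚ) * (1 + e) / (((4*g+c).toNat : ℚ))) •
            !![(X : Polynomial ℚ), 0; 0, -X] := by
        intro g hg
        have h1 := hkg g hg
        have h2 := hg2 g hg
        rw [Bmat_even ((4*g+c).toNat) (by omega) (by omega), hsign g hg]
      set Mf : Fin (m+2) → Matrix (Fin 2) (Fin 2) (Polynomial ℚ) :=
        fun q => if q = qs then !![(X : Polynomial ℚ), 0; 0, -X] else Bmat ((k₀ q).toNat) with hMf
      set r : ℚ := (Matrix.trace ((List.ofFn Mf).prod)).coeff 1 with hr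
      have hbval : ∀ g : ℤ, g₀ ≤ g →
          (bSeq (m + 2) (Kfun (Fin.snoc i (4 * g + A)) σ j) : ℚ)
          = ((df ((4*g+c).toNat - 1) : ℚ) * (1 + e) / (((4*g+c).toNat : ℚ))) * r := by
        intro g hg
        rw [hbSeq g hg]
        have hfun : (fun q => Bmat (if q = qs then (4*g+c).toNat else (k₀ q).toNat))
            = fun q => (if q = qs then ((df ((4*g+c).toNat - 1) : ℚ) * (1 + e) / (((4*g+c).toNat : ℚ))) else 1) • Mf q := by
          funext q
          by_cases hq : q = qs
          · rw [if_pos hq, if_pos hq, hMf]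
            simp only [if_pos hq]
            exact hBe g hg
          · rw [if_neg hq, if_neg hq, hMf]
            simp only [if_neg hq]
            rw [one_smul]
        rw [hfun, ofFn_prod_smul, Matrix.trace_smul, Polynomial.coeff_smul, smul_eq_mul, hr]
        congr 1
        simp
      have hW : ∀ g : ℤ, g₀ ≤ g → ((df ((4*g+c).toNat - 1) : ℤ)) = dfacZ (4 * g + (c-1)) := by
        intro g hg
        have h1 := hkg g hg
        have h2 := hg2 g hg
        have harg2 : (4*g+c).toNat - 1 = (4*g + (c-1)).toNat := by omega
        rw [dfacZ_eq_df _ (by omega), harg2]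
      obtain ⟨p₁, q₁, G₁, hq₁, h₁⟩ := dfac_ratio (c - 1) (2 * ((m + 2 : ℕ) : ℤ) - 5) (by omega)
      have hlinne : (C (4:ℚ) * X + C (c:ℚ)) ≠ 0 := by
        intro h0
        have h4 : Polynomial.coeff (C (4:ℚ) * X + C (c:ℚ)) 1 = 0 := by rw [h0]; simp
        rw [Polynomial.coeff_add, Polynomial.coeff_C_mul, Polynomial.coeff_X_one,
          Polynomial.coeff_C] at h4
        norm_num at h4
      have hm2' : (2 * ((m+2:ℕ):ℚ)) ≠ 0 := by
        refine mul_ne_zero two_ne_zero hm2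
      refine ⟨C (sq * r * (1 + e)) * p₁,
        C (2 * ((m+2:ℕ):ℚ)) * q₁ * (C (4:ℚ) * X + C (c:ℚ)), max g₀ G₁,
        mul_ne_zero (mul_ne_zero (Polynomial.C_ne_zero.mpr hm2') hq₁) hlinne, ?_⟩
      intro g hg
      have hgg₀ : g₀ ≤ g := le_trans (le_max_left _ _) hg
      have hgG₁ : G₁ ≤ g := le_trans (le_max_right _ _) hg
      obtain ⟨hq₁ne, hid⟩ := h₁ g hgG₁
      have hkq : ((4 * g + c : ℤ) : ℚ) ≠ 0 := by
        have := hg2 g hgg₀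
        exact_mod_cast (by omega : (4*g+c : ℤ) ≠ 0)
      have hc4 : (4:ℚ) * (g:ℚ) + (c:ℚ) = ((4*g+c : ℤ) : ℚ) := by push_cast; ring
      have hbne : (2 * ((m+2:ℕ):ℚ)) * Polynomial.eval (g:ℚ) q₁ * ((4*g+c : ℤ) : ℚ) ≠ 0 :=
        mul_ne_zero (mul_ne_zero hm2' hq₁ne) hkq
      have hqevalne : Polynomial.eval (g:ℚ)
          (C (2 * ((m+2:ℕ):ℚ)) * q₁ * (C (4:ℚ) * X + C (c:ℚ))) ≠ 0 := by
        simp only [Polynomial.eval_mul, Polynomial.eval_add, Polynomial.eval_C, Polynomial.eval_X]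
        rw [hc4]
        exact hbne
      refine ⟨hqevalne, ?_⟩
      simp only [hbval g hgg₀, hsqcast]
      have hW' : ((df ((4*g+c).toNat - 1) : ℚ)) = ((dfacZ (4*g + (c-1)) : ℤ) : ℚ) := by
        exact_mod_cast congrArg (fun z : ℤ => (z : ℚ)) (hW g hgg₀)
      have hk2 : (((4*g+c).toNat : ℚ)) = ((4*g+c : ℤ) : ℚ) := by
        exact_mod_cast hkg g hgg₀
      have hDb : (4*g + 2*((m+2:ℕ):ℤ) - 5) = 4*g + (2*((m+2:ℕ):ℤ) - 5) := by ring
      have hDne' : ((dfacZ (4*g + (2*((m+2:ℕ):ℤ) - 5)) : ℤ) : ℚ) ≠ 0 := by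
        exact_mod_cast (dfacZ_pos _).ne'
      have hane : (2 * ((m+2:ℕ):ℚ)) * ((dfacZ (4*g + (2*((m+2:ℕ):ℤ) - 5)) : ℤ) : ℚ) ≠ 0 :=
        mul_ne_zero hm2' hDne'
      have key : 1 / (2 * ((m+2:ℕ):ℚ) * ((dfacZ (4*g + (2*((m+2:ℕ):ℤ) - 5)) : ℤ) : ℚ)) *
          (sq * (((dfacZ (4*g + (c-1)) : ℤ) : ℚ) * (1 + e) / (((4*g+c : ℤ) : ℚ)) * r))
          = Polynomial.eval (g:ℚ) (C (sq * r * (1 + e)) * p₁) /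
            Polynomial.eval (g:ℚ) (C (2 * ((m+2:ℕ):ℚ)) * q₁ * (C (4:ℚ) * X + C (c:ℚ))) := by
        simp only [Polynomial.eval_mul, Polynomial.eval_add, Polynomial.eval_C, Polynomial.eval_X]
        rw [hc4]
        refine helper_div _ _ _ _ hane hbne ?_
        calc sq * (((dfacZ (4*g + (c-1)) : ℤ) : ℚ) * (1 + e) / (((4*g+c : ℤ) : ℚ)) * r) *
              (2 * ((m+2:ℕ):ℚ) * Polynomial.eval (g:ℚ) q₁ * ((4*g+c : ℤ) : ℚ))
            = (sq * (1 + e) * r * (2 * ((m+2:ℕ):ℚ)) *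
                (((dfacZ (4*g + (c-1)) : ℤ) : ℚ) * Polynomial.eval (g:ℚ) q₁)) *
              ((((4*g+c : ℤ) : ℚ))⁻¹ * (((4*g+c : ℤ) : ℚ))) := by ring
          _ = (sq * (1 + e) * r * (2 * ((m+2:ℕ):ℚ)) *
                (((dfacZ (4*g + (c-1)) : ℤ) : ℚ) * Polynomial.eval (g:ℚ) q₁)) * 1 := by
              rw [inv_mul_cancel₀ hkq]
          _ = sq * r * (1 + e) * Polynomial.eval (g:ℚ) p₁ *
              (2 * ((m+2:ℕ):ℚ) * ((dfacZ (4*g + (2*((m+2:ℕ):ℤ) - 5)) : ℤ) : ℚ)) := by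
              linear_combination (sq * (1 + e) * r * (2 * ((m+2:ℕ):ℚ))) * hid
      calc 1 / (2 * ((m + 2 : ℕ) : ℝ) * ((dfacZ (4 * g + 2 * ((m + 2 : ℕ) : ℤ) - 5) : ℤ) : ℝ)) *
            ((sq * (((df ((4*g+c).toNat - 1) : ℚ) * (1 + e) / (((4*g+c).toNat : ℚ))) * r) : ℚ) : ℝ)
          = ((1 / (2 * ((m+2:ℕ):ℚ) * ((dfacZ (4*g + (2*((m+2:ℕ):ℤ) - 5)) : ℤ) : ℚ)) *
              (sq * (((dfacZ (4*g + (c-1)) : ℤ) : ℚ) * (1 + e) / (((4*g+c : ℤ) : ℚ)) * r)) : ℚ) : ℝ) := by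
            rw [hW', hk2, ← hDb]
            push_cast
            ring
        _ = _ := by rw [key, Rat.cast_div]
    · -- c odd
      set e : ℚ := (-1 : ℚ) ^ (((4*g₀+c).toNat - 1) / 2) with he
      have hsign : ∀ g : ℤ, g₀ ≤ g → (-1 : ℚ) ^ (((4*g+c).toNat - 1) / 2) = e := by
        intro g hg
        have h1 := hkg g hg
        have h2 := hkg g₀ le_rfl
        have hd : (((g - g₀).toNat : ℤ)) = g - g₀ := Int.toNat_of_nonneg (by omega)
        have hge := hg2 g₀ le_rfl
        have hodd : (4*g₀+c) % 2 = 1 := by omega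
        have h5 : ((4*g+c).toNat - 1) / 2 = ((4*g₀+c).toNat - 1) / 2 + 2 * (g - g₀).toNat := by
          omega
        rw [h5, pow_add, pow_mul, he]
        norm_num
      have hBo : ∀ g : ℤ, g₀ ≤ g → Bmat ((4*g+c).toNat)
          = (df ((4*g+c).toNat - 2) : ℚ) • !![0, -(X : Polynomial ℚ); C e, 0] := by
        intro g hg
        have h1 := hkg g hg
        have h2 := hg2 g hg
        rw [Bmat_odd ((4*g+c).toNat) (by omega), hsign g hg]
      set Mf : Fin (m+2) → Matrix (Fin 2) (Fin 2) (Polynomial ℚ) :=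
        fun q => if q = qs then !![0, -(X : Polynomial ℚ); C e, 0] else Bmat ((k₀ q).toNat) with hMf
      set r : ℚ := (Matrix.trace ((List.ofFn Mf).prod)).coeff 1 with hr
      have hbval : ∀ g : ℤ, g₀ ≤ g →
          (bSeq (m + 2) (Kfun (Fin.snoc i (4 * g + A)) σ j) : ℚ)
          = (df ((4*g+c).toNat - 2) : ℚ) * r := by
        intro g hg
        rw [hbSeq g hg]
        have hfun : (fun q => Bmat (if q = qs then (4*g+c).toNat else (k₀ q).toNat))
            = fun q => (if q = qs then (df ((4*g+c).toNat - 2) : ℚ) else 1) • Mf q := by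
          funext q
          by_cases hq : q = qs
          · rw [if_pos hq, if_pos hq, hMf]
            simp only [if_pos hq]
            exact hBo g hg
          · rw [if_neg hq, if_neg hq, hMf]
            simp only [if_neg hq]
            rw [one_smul]
        rw [hfun, ofFn_prod_smul, Matrix.trace_smul, Polynomial.coeff_smul, smul_eq_mul, hr]
        congr 1
        simp
      have hW : ∀ g : ℤ, g₀ ≤ g → ((df ((4*g+c).toNat - 2) : ℤ)) = dfacZ (4 * g + (c-2)) := by
        intro g hg
        have h1 := hkg g hg
        have h2 := hg2 g hg
        have harg2 : (4*g+c).toNat - 2 = (4*g + (c-2)).toNat := by omega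
        rw [dfacZ_eq_df _ (by omega), harg2]
      obtain ⟨p₁, q₁, G₁, hq₁, h₁⟩ := dfac_ratio (c - 2) (2 * ((m + 2 : ℕ) : ℤ) - 5) (by omega)
      have hm2' : (2 * ((m+2:ℕ):ℚ)) ≠ 0 := by
        refine mul_ne_zero two_ne_zero hm2
      refine ⟨C (sq * r) * p₁, C (2 * ((m+2:ℕ):ℚ)) * q₁, max g₀ G₁,
        mul_ne_zero (Polynomial.C_ne_zero.mpr hm2') hq₁, ?_⟩
      intro g hg
      have hgg₀ : g₀ ≤ g := le_trans (le_max_left _ _) hg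
      have hgG₁ : G₁ ≤ g := le_trans (le_max_right _ _) hg
      obtain ⟨hq₁ne, hid⟩ := h₁ g hgG₁
      have hbne : (2 * ((m+2:ℕ):ℚ)) * Polynomial.eval (g:ℚ) q₁ ≠ 0 :=
        mul_ne_zero hm2' hq₁ne
      have hqevalne : Polynomial.eval (g:ℚ) (C (2 * ((m+2:ℕ):ℚ)) * q₁) ≠ 0 := by
        simp only [Polynomial.eval_mul, Polynomial.eval_C]
        exact hbne
      refine ⟨hqevalne, ?_⟩
      simp only [hbval g hgg₀, hsqcast]
      have hW' : ((df ((4*g+c).toNat - 2) : ℚ)) = ((dfacZ (4*g + (c-2)) : ℤ) : ℚ) := by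
        exact_mod_cast congrArg (fun z : ℤ => (z : ℚ)) (hW g hgg₀)
      have hDb : (4*g + 2*((m+2:ℕ):ℤ) - 5) = 4*g + (2*((m+2:ℕ):ℤ) - 5) := by ring
      have hDne' : ((dfacZ (4*g + (2*((m+2:ℕ):ℤ) - 5)) : ℤ) : ℚ) ≠ 0 := by
        exact_mod_cast (dfacZ_pos _).ne'
      have hane : (2 * ((m+2:ℕ):ℚ)) * ((dfacZ (4*g + (2*((m+2:ℕ):ℤ) - 5)) : ℤ) : ℚ) ≠ 0 :=
        mul_ne_zero hm2' hDne'
      have key : 1 / (2 * ((m+2:ℕ):ℚ) * ((dfacZ (4*g + (2*((m+2:ℕ):ℤ) - 5)) : ℤ) : ℚ)) *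
          (sq * (((dfacZ (4*g + (c-2)) : ℤ) : ℚ) * r))
          = Polynomial.eval (g:ℚ) (C (sq * r) * p₁) /
            Polynomial.eval (g:ℚ) (C (2 * ((m+2:ℕ):ℚ)) * q₁) := by
        simp only [Polynomial.eval_mul, Polynomial.eval_C]
        refine helper_div _ _ _ _ hane hbne ?_
        linear_combination (sq * r * (2 * ((m+2:ℕ):ℚ))) * hid
      calc 1 / (2 * ((m + 2 : ℕ) : ℝ) * ((dfacZ (4 * g + 2 * ((m + 2 : ℕ) : ℤ) - 5) : ℤ) : ℝ)) *
            ((sq * ((df ((4*g+c).toNat - 2) : ℚ) * r) : ℚ) : ℝ)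
          = ((1 / (2 * ((m+2:ℕ):ℚ) * ((dfacZ (4*g + (2*((m+2:ℕ):ℤ) - 5)) : ℤ) : ℚ)) *
              (sq * (((dfacZ (4*g + (c-2)) : ℤ) : ℚ) * r)) : ℚ) : ℝ) := by
            rw [hW', ← hDb]
            push_cast
            ring
        _ = _ := by rw [key, Rat.cast_div]

lemma bSeq_vanish (m : ℕ) (i : Fin (m+1) → ℤ) (hi : ∀ p, 1 ≤ i p) (A : ℤ)
    (σ : Equiv.Perm (Fin (m+2))) (j : Fin (m+2) → ℕ)
    (hj : j ∉ Fintype.piFinset (fun _ : Fin (m+2) =>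
      Finset.range (((((m:ℤ)+2) * (∑ p, i p)).toNat) + 1))) :
    bSeq (m+2) (Kfun (Fin.snoc i A) σ j) = 0 := by
  classical
  by_cases hK : ∀ q, 0 ≤ Kfun (Fin.snoc i A) σ j q
  · exfalso
    apply hj
    rw [Fintype.mem_piFinset]
    intro q
    rw [Finset.mem_range]
    have hInn : (0:ℤ) ≤ ∑ p, i p :=
      Finset.sum_nonneg fun p _ => le_trans zero_le_one (hi p)
    have hb : ∀ v : Fin (m+2), v ≠ Fin.last (m+1) → (Fin.snoc i A : Fin (m+2) → ℤ) v ≤ ∑ p, i p := by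
      intro v hv
      obtain ⟨p, hp⟩ := Fin.exists_castSucc_eq.mpr hv
      rw [← hp, Fin.snoc_castSucc]
      exact Finset.single_le_sum (fun p _ => le_trans zero_le_one (hi p)) (Finset.mem_univ p)
    have := j_bound m (Fin.snoc i A) (∑ p, i p) hInn hb σ j hK q
    omega
  · rw [bSeq, if_neg hK]

/-- **Theorem 1.5** (paper `n = m+2 ≥ 2`): for fixed `i_1,…,i_{n−1} ≥ 1`, the normalized
enumeration `𝒢^rg_{i_1,…,i_{n−1},4g+2n−2−|i|}(g)` is, for large `g`, a rational function of `g`: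
there are `p, q ∈ ℚ[x]`, `q ≠ 0`, and `g₀ ∈ ℤ` with `q(g) ≠ 0` and `𝒢^rg(g) = p(g)/q(g)`
for all `g ≥ g₀`. -/
theorem GUE_ribbon_graphs_rationality (m : ℕ) (i : Fin (m + 1) → ℤ)
    (hi : ∀ p, 1 ≤ i p) :
    ∃ (p q : Polynomial ℚ) (g₀ : ℤ), q ≠ 0 ∧ ∀ g : ℤ, g₀ ≤ g →
      Polynomial.eval (g : ℚ) q ≠ 0 ∧
      Grg (m + 2) (Fin.snoc i (4 * g + 2 * (m + 2 : ℕ) - 2 - ∑ p, i p)) g =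
        ((Polynomial.eval (g : ℚ) p : ℚ) : ℝ) / ((Polynomial.eval (g : ℚ) q : ℚ) : ℝ) := by
  classical
  have harg : ∀ g : ℤ, 4 * g + 2 * ((m + 2 : ℕ) : ℤ) - 2 - ∑ p, i p
      = 4 * g + (2 * ((m + 2 : ℕ) : ℤ) - 2 - ∑ p, i p) := fun g => by ring
  set A : ℤ := 2 * ((m + 2 : ℕ) : ℤ) - 2 - ∑ p, i p with hA
  set box : Finset (Fin (m+2) → ℕ) := Fintype.piFinset (fun _ : Fin (m+2) =>
    Finset.range (((((m:ℤ)+2) * (∑ p, i p)).toNat) + 1)) with hbox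
  have hGrg : ∀ g : ℤ, Grg (m + 2) (Fin.snoc i (4 * g + 2 * ((m + 2 : ℕ) : ℤ) - 2 - ∑ p, i p)) g
      = ∑ σ : Equiv.Perm (Fin (m+2)), ∑ jj ∈ box,
          1 / (2 * ((m + 2 : ℕ) : ℝ) * ((dfacZ (4 * g + 2 * ((m + 2 : ℕ) : ℤ) - 5) : ℤ) : ℝ)) *
            ((-1 : ℝ) ^ (mcount σ + 1) *
              ((bSeq (m + 2) (Kfun (Fin.snoc i (4 * g + A)) σ jj) : ℚ) : ℝ)) := by
    intro g
    rw [Grg]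
    rw [show (4 * g + 2 * ((m + 2 : ℕ) : ℤ) - 2 - ∑ p, i p) = 4 * g + A from harg g]
    have htsum : ∀ σ : Equiv.Perm (Fin (m+2)),
        (∑' jj : Fin (m+2) → ℕ, ((bSeq (m+2) (Kfun (Fin.snoc i (4*g + A)) σ jj) : ℚ) : ℝ))
        = ∑ jj ∈ box, ((bSeq (m+2) (Kfun (Fin.snoc i (4*g + A)) σ jj) : ℚ) : ℝ) := by
      intro σ
      refine tsum_eq_sum ?_
      intro jj hjj
      rw [bSeq_vanish m i hi (4*g+A) σ jj hjj]
      simp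
    simp only [htsum]
    rw [Finset.mul_sum]
    refine Finset.sum_congr rfl fun σ _ => ?_
    rw [Finset.mul_sum, Finset.mul_sum]
  have key : EvRat (fun g : ℤ => ∑ σ : Equiv.Perm (Fin (m+2)), ∑ jj ∈ box,
      1 / (2 * ((m + 2 : ℕ) : ℝ) * ((dfacZ (4 * g + 2 * ((m + 2 : ℕ) : ℤ) - 5) : ℤ) : ℝ)) *
        ((-1 : ℝ) ^ (mcount σ + 1) *
          ((bSeq (m + 2) (Kfun (Fin.snoc i (4 * g + A)) σ jj) : ℚ) : ℝ))) := by
    refine evRat_sum _ _ fun σ _ => evRat_sum _ _ fun jj _ => ?_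
    exact per_term m i A σ jj
  obtain ⟨p, q, g₀, hq, H⟩ := key.congr (fun g => (hGrg g).symm)
  exact ⟨p, q, g₀, hq, H⟩
end

section
/- Let n ≥ 2, let σ be a permutation of {1,…,n}, and let λ_1,…,λ_n be nonzero complex numbers with |λ_1| > |λ_2| > ⋯ > |λ_n| > 0. Then the family indexed by j = (j_1,…,j_n) ∈ (ℤ_{≥0})^n with terms ∏_{q=1}^{n} λ_{σ(q)}^{J_{σ,q}(j_q) − J_{σ,q−1}(j_{q−1}) − 1} (integer exponents; cyclic conventions j_0 := j_n, σ(0) := σ(n)) is summable, and its sum equals (−1)^{m(σ)} / ∏_{q=1}^{n} (λ_{σ(q)} − λ_{σ(q+1)}), where σ(n+1) := σ(1). Equivalently, the Laurent expansion of P(σ; λ_1,…,λ_n) = 1/∏_{q=1}^{n}(λ_{σ(q)} − λ_{σ(q+1)}) around ∞ in the region |λ_1| > ⋯ > |λ_n| is (−1)^{m(σ)} Σ_{j_1,…,j_n ≥ 0} ∏_{q=1}^{n} λ_{σ(q)}^{J_{σ,q}(j_q) − J_{σ,q−1}(j_{q−1}) − 1}. -/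
set_option maxHeartbeats 1000000 in
lemma hasSum_pi_prod : ∀ (n : ℕ) (f : Fin n → ℕ → ℂ) (s : Fin n → ℂ),
    (∀ i, HasSum (f i) (s i)) →
    HasSum (fun j : Fin n → ℕ => ∏ i, f i (j i)) (∏ i, s i) := by
  intro n
  induction n with
  | zero =>
    intro f s _
    simpa using hasSum_fintype (fun j : Fin 0 → ℕ => ∏ i, f i (j i))
  | succ n ih =>
    intro f s h
    have IH := ih (fun i => f i.succ) (fun i => s i.succ) (fun i => h i.succ)
    have h0 := h 0
    have S1 : Summable fun x : ℕ => ‖f 0 x‖ := summable_norm_iff.mpr h0.summable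
    have S2 : Summable fun x : Fin n → ℕ => ‖∏ i, f i.succ (x i)‖ :=
      summable_norm_iff.mpr IH.summable
    have S := summable_mul_of_summable_norm S1 S2
    have hmul := h0.mul IH S
    rw [Fin.prod_univ_succ s]
    refine (Equiv.hasSum_iff (Fin.consEquiv (fun _ : Fin (n + 1) => ℕ))).mp ?_
    convert hmul using 1
    · rfl
    funext x
    simp [Fin.prod_univ_succ, Fin.consEquiv]

lemma hasSum_geom_pair (a b : ℂ) (ha : a ≠ 0) (hab : ‖b‖ < ‖a‖) :
    HasSum (fun j : ℕ => a ^ (-(j : ℤ) - 1) * b ^ (j : ℤ)) (a - b)⁻¹ := by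
  have hr : ‖b / a‖ < 1 := by
    rw [norm_div, div_lt_one (by simpa using (norm_pos_iff.mpr ha))]
    simpa using hab
  have hg := (hasSum_geometric_of_norm_lt_one hr).mul_left a⁻¹
  have heq : (fun j : ℕ => a⁻¹ * (b / a) ^ j) =
      fun j : ℕ => a ^ (-(j : ℤ) - 1) * b ^ (j : ℤ) := by
    funext j
    rw [div_pow, zpow_sub₀ ha, zpow_neg, zpow_natCast, zpow_natCast, zpow_one]
    field_simp
  rw [heq] at hg
  convert hg using 1
  · rfl
  rw [inv_eq_iff_eq_inv, mul_inv, inv_inv, inv_inv]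
  have h1 : (1 : ℂ) - b / a ≠ 0 := by
    intro h
    apply hr.ne'
    rw [sub_eq_zero] at h
    simp [← h]
  field_simp

/-- **Lemma 2.1** (paper `n = m+2 ≥ 2`): for `|λ_1| > ⋯ > |λ_n| > 0`, the family
`∏_q λ_{σ(q)}^{J_{σ,q}(j_q) − J_{σ,q−1}(j_{q−1}) − 1}` over `j ∈ (ℤ_{≥0})^n` is summable with
sum `(−1)^{m(σ)} / ∏_q (λ_{σ(q)} − λ_{σ(q+1)})`; i.e. this is the Laurent expansion of
`P(σ;λ_1,…,λ_n)` around `∞` in that region, up to the sign `(−1)^{m(σ)}`. -/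
theorem GUE_laurent_expansion_P (m : ℕ) (σ : Equiv.Perm (Fin (m + 2)))
    (lam : Fin (m + 2) → ℂ) (hne : ∀ q, lam q ≠ 0)
    (hlt : ∀ a b : Fin (m + 2), a < b → ‖lam b‖ < ‖lam a‖) :
    HasSum
      (fun j : Fin (m + 2) → ℕ =>
        ∏ q, lam (σ q) ^ (Jfun σ q (j q) - Jfun σ (q - 1) (j (q - 1)) - 1))
      ((-1 : ℂ) ^ mcount σ / ∏ q, (lam (σ q) - lam (σ (q + 1)))) := by
  have hqne : ∀ q : Fin (m + 2), σ q ≠ σ (q + 1) := by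
    intro q h
    have hq : q = q + 1 := σ.injective h
    have h1 : (1 : Fin (m + 2)) = 0 := left_eq_add.mp hq
    simp [Fin.ext_iff] at h1
  set g : Fin (m + 2) → ℕ → ℂ := fun q j =>
    lam (σ q) ^ (Jfun σ q j) * lam (σ (q + 1)) ^ (-(Jfun σ q j) - 1) with hg
  set s : Fin (m + 2) → ℂ := fun q =>
    if σ q < σ (q + 1) then (lam (σ q) - lam (σ (q + 1)))⁻¹
    else -(lam (σ q) - lam (σ (q + 1)))⁻¹ with hs
  have hsum : ∀ q, HasSum (g q) (s q) := by
    intro q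
    by_cases hlt' : σ q < σ (q + 1)
    · have key := hasSum_geom_pair (lam (σ q)) (lam (σ (q + 1))) (hne _)
        (hlt _ _ hlt')
      simp only [hg, hs, Jfun, hlt', if_pos]
      convert key using 2 with j
      ring_nf
    · have hgt : σ (q + 1) < σ q := (hqne q).lt_or_gt.resolve_left (by
        intro h; exact hlt' h)
      have key := hasSum_geom_pair (lam (σ (q + 1))) (lam (σ q)) (hne _)
        (hlt _ _ hgt)
      simp only [hg, hs, Jfun, hlt', if_neg, not_false_iff]
      have hninv : -(lam (σ q) - lam (σ (q + 1)))⁻¹ = (lam (σ (q + 1)) - lam (σ q))⁻¹ := by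
        rw [← inv_neg, neg_sub]
      rw [hninv]
      have hfe : (fun j : ℕ => lam (σ q) ^ (j : ℤ) * lam (σ (q + 1)) ^ (-(j : ℤ) - 1)) =
          fun j : ℕ => lam (σ (q + 1)) ^ (-(j : ℤ) - 1) * lam (σ q) ^ (j : ℤ) := by
        funext j; ring
      rw [hfe]
      exact key
  have htot := hasSum_pi_prod (m + 2) g s hsum
  have hfun : (fun j : Fin (m + 2) → ℕ => ∏ q, g q (j q)) =
      fun j : Fin (m + 2) → ℕ =>
        ∏ q, lam (σ q) ^ (Jfun σ q (j q) - Jfun σ (q - 1) (j (q - 1)) - 1) := by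
    funext j
    have h1 : ∀ q : Fin (m + 2),
        lam (σ q) ^ (Jfun σ q (j q) - Jfun σ (q - 1) (j (q - 1)) - 1) =
        lam (σ q) ^ (Jfun σ q (j q)) * lam (σ q) ^ (-(Jfun σ (q - 1) (j (q - 1))) - 1) := by
      intro q
      rw [← zpow_add₀ (hne _)]
      ring_nf
    calc ∏ q, g q (j q)
        = (∏ q, lam (σ q) ^ (Jfun σ q (j q))) *
          ∏ q, lam (σ (q + 1)) ^ (-(Jfun σ q (j q)) - 1) := by
          rw [← Finset.prod_mul_distrib]
      _ = (∏ q, lam (σ q) ^ (Jfun σ q (j q))) *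
          ∏ q, lam (σ q) ^ (-(Jfun σ (q - 1) (j (q - 1))) - 1) := by
          congr 1
          have := Equiv.prod_comp (Equiv.addRight (1 : Fin (m + 2)))
            (fun q => lam (σ q) ^ (-(Jfun σ (q - 1) (j (q - 1))) - 1))
          rw [← this]
          refine Finset.prod_congr rfl fun q _ => ?_
          simp
      _ = ∏ q, lam (σ q) ^ (Jfun σ q (j q) - Jfun σ (q - 1) (j (q - 1)) - 1) := by
          rw [← Finset.prod_mul_distrib]
          exact Finset.prod_congr rfl fun q _ => (h1 q).symm
  rw [hfun] at htot
  have hval : (∏ q, s q) =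
      (-1 : ℂ) ^ mcount σ / ∏ q, (lam (σ q) - lam (σ (q + 1))) := by
    have : ∀ q : Fin (m + 2), s q =
        (if σ q < σ (q + 1) then (1 : ℂ) else -1) * (lam (σ q) - lam (σ (q + 1)))⁻¹ := by
      intro q
      by_cases h : σ q < σ (q + 1) <;> simp [hs, h]
    rw [Finset.prod_congr rfl fun q _ => this q, Finset.prod_mul_distrib,
      Finset.prod_inv_distrib, div_eq_mul_inv]
    congr 1
    have hfilt : Finset.univ.filter (fun q : Fin (m + 2) => ¬ σ q < σ (q + 1)) =
        Finset.univ.filter (fun q => σ (q + 1) < σ q) := by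
      refine Finset.filter_congr fun q _ => ?_
      simp only [not_lt]
      exact ⟨fun h => h.lt_of_ne (hqne q).symm, le_of_lt⟩
    rw [Finset.prod_ite, Finset.prod_const_one, one_mul, hfilt, Finset.prod_const]
    rfl
  rw [← hval]
  exact htot
end

section
/- Let n ≥ 2, let i = (i_1,…,i_n) be integers with all i_p ≥ 1 and total T := i_1+⋯+i_n, and let σ be a permutation of {1,…,n} with σ(n) = n. Then the number of tuples j ∈ (ℤ_{≥0})^n satisfying K_{i,σ,q}(j) = 0 for all 1 ≤ q ≤ n−1 and K_{i,σ,n}(j) = T equals i_1 if σ belongs to S_n^{{2}}, and equals 0 if σ does not belong to S_n^{{2}}. -/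
open Fin.CommRing

section Aux
variable {m : ℕ} (i : Fin (m + 2) → ℤ) (σ : Equiv.Perm (Fin (m + 2)))

/-- partial sums of `i ∘ σ` along positions `0..k`. -/
def sfun (k : ℕ) : ℤ := ∑ p ∈ Finset.range (k + 1), i (σ (p : Fin (m + 2)))

lemma sfun_zero : sfun i σ 0 = i (σ 0) := by simp [sfun]

lemma sfun_succ (k : ℕ) :
    sfun i σ (k + 1) = sfun i σ k + i (σ ((k + 1 : ℕ) : Fin (m + 2))) := by
  simp [sfun, Finset.sum_range_succ]

lemma val_fc (k : ℕ) (h : k ≤ m + 1) : ((k : Fin (m + 2)) : ℕ) = k := by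
  rw [Fin.val_natCast]; exact Nat.mod_eq_of_lt (by omega)

lemma fc_val (q : Fin (m + 2)) : ((q.val : ℕ) : Fin (m + 2)) = q :=
  Fin.cast_val_eq_self q

lemma fc_last : ((m + 1 : ℕ) : Fin (m + 2)) = Fin.last (m + 1) := by
  exact Fin.natCast_eq_last (m+1)

lemma fc_add_one (k : ℕ) : ((k : ℕ) : Fin (m + 2)) + 1 = ((k + 1 : ℕ) : Fin (m + 2)) := by
  push_cast; ring

lemma zero_sub_one_fin : (0 : Fin (m + 2)) - 1 = Fin.last (m + 1) := by
  have h : Fin.last (m + 1) + 1 = 0 := Fin.last_add_one (m+1)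
  rw [← h]; ring

lemma sfun_pos (hi : ∀ p, 1 ≤ i p) (k : ℕ) : (k : ℤ) + 1 ≤ sfun i σ k := by
  have : ∀ p ∈ Finset.range (k+1), (1:ℤ) ≤ i (σ (p : Fin (m+2))) := fun p _ => hi _
  calc (k:ℤ) + 1 = ∑ _p ∈ Finset.range (k+1), (1:ℤ) := by simp
    _ ≤ _ := Finset.sum_le_sum this

lemma sfun_mono (hi : ∀ p, 1 ≤ i p) {k l : ℕ} (h : k ≤ l) : sfun i σ k ≤ sfun i σ l := by
  induction l with
  | zero => simpa [Nat.le_zero.mp h]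
  | succ l ih =>
    rcases Nat.lt_or_ge k (l+1) with h' | h'
    · have := hi (σ ((l + 1 : ℕ) : Fin (m + 2)))
      have := ih (by omega)
      rw [sfun_succ]; linarith
    · have : k = l + 1 := by omega
      simp [this]

lemma sfun_strict (hi : ∀ p, 1 ≤ i p) {k l : ℕ} (h : k < l) : sfun i σ k < sfun i σ l := by
  have h1 := sfun_mono i σ hi (Nat.succ_le_of_lt h)
  have := hi (σ ((k + 1 : ℕ) : Fin (m + 2)))
  rw [sfun_succ] at h1; linarith
lemma Jfun_last (hσ : σ (Fin.last (m + 1)) = Fin.last (m + 1)) (j : ℕ) : Jfun σ (Fin.last (m + 1)) j = (j : ℤ) := by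
  have h1 : Fin.last (m + 1) + 1 = 0 := Fin.last_add_one (m+1)
  have h2 : ¬ σ (Fin.last (m+1)) < σ (Fin.last (m+1) + 1) := by
    rw [h1, hσ]; exact not_lt.mpr (Fin.le_last _)
  rw [Jfun, if_neg h2]

lemma sfun_total : sfun i σ (m + 1) = ∑ p, i p := by
  have : sfun i σ (m+1) = ∑ q : Fin (m+2), i (σ q) := by
    rw [sfun, ← Fin.sum_univ_eq_sum_range (fun p => i (σ (p : Fin (m+2)))) (m+2)]
    apply Finset.sum_congr rfl
    intro q _
    rw [fc_val]
  rw [this, Equiv.sum_comp σ i]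

lemma ne_last_of_le {k : ℕ} (h : k ≤ m) : ((k : ℕ) : Fin (m + 2)) ≠ Fin.last (m + 1) := by
  intro hc
  have := congrArg Fin.val hc
  rw [val_fc k (by omega)] at this
  simp [Fin.last] at this
  omega

lemma X_eq (j : Fin (m + 2) → ℕ)
    (hσ : σ (Fin.last (m + 1)) = Fin.last (m + 1))
    (hj : ∀ q, q ≠ Fin.last (m + 1) → Kfun i σ j q = 0) :
    ∀ k, k ≤ m →
      Jfun σ ((k : ℕ) : Fin (m + 2)) (j ((k : ℕ) : Fin (m + 2)))
        = (j (Fin.last (m + 1)) : ℤ) - sfun i σ k := by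
  intro k
  induction k with
  | zero =>
    intro _
    have h0 : ((0 : ℕ) : Fin (m + 2)) = 0 := by norm_num
    have hK := hj 0 (by
      intro hc
      have := congrArg Fin.val hc
      simp [Fin.last] at this)
    rw [Kfun, zero_sub_one_fin, Jfun_last σ hσ] at hK
    rw [h0, sfun_zero]
    omega
  | succ k ih =>
    intro hk
    have hK := hj ((k + 1 : ℕ) : Fin (m + 2)) (ne_last_of_le (by omega))
    have hsub : ((k + 1 : ℕ) : Fin (m + 2)) - 1 = ((k : ℕ) : Fin (m + 2)) := by
      rw [← fc_add_one, add_sub_cancel_right]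
    rw [Kfun, hsub, ih (by omega)] at hK
    rw [sfun_succ]
    omega

/-- the candidate solution for a given value `t` of `j last`. -/
def jOf (t : ℕ) (q : Fin (m + 2)) : ℕ :=
  if q = Fin.last (m + 1) then t
  else if sfun i σ q.val ≤ (t : ℤ) then ((t : ℤ) - sfun i σ q.val).toNat
  else (sfun i σ q.val - (t : ℤ) - 1).toNat

/-- set of admissible `t`. -/
def Tset : Set ℕ :=
  {t | ∀ k, k ≤ m →
    (sfun i σ k ≤ (t : ℤ) ↔ σ (((k + 1 : ℕ)) : Fin (m + 2)) < σ ((k : ℕ) : Fin (m + 2)))}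

lemma sigma_ne (q : Fin (m + 2)) : σ q ≠ σ (q + 1) := by
  intro h
  have h2 : q = q + 1 := σ.injective h
  have : (0 : Fin (m + 2)) = 1 := by
    nth_rewrite 1 [show q = q + 0 by ring] at h2
    exact add_left_cancel h2
  simp at this

lemma forward (j : Fin (m + 2) → ℕ)
    (hσ : σ (Fin.last (m + 1)) = Fin.last (m + 1))
    (hj : ∀ q, q ≠ Fin.last (m + 1) → Kfun i σ j q = 0) :
    j (Fin.last (m + 1)) ∈ Tset i σ ∧ j = jOf i σ (j (Fin.last (m + 1))) := by
  set t := j (Fin.last (m + 1)) with ht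
  have key : ∀ k, k ≤ m →
      (sfun i σ k ≤ (t : ℤ) ↔ σ (((k + 1 : ℕ)) : Fin (m + 2)) < σ ((k : ℕ) : Fin (m + 2)))
      ∧ j ((k : ℕ) : Fin (m + 2)) = jOf i σ t ((k : ℕ) : Fin (m + 2)) := by
    intro k hk
    have hX := X_eq i σ j hσ hj k hk
    have hne := sigma_ne σ ((k : ℕ) : Fin (m + 2))
    rw [fc_add_one] at hne
    have hval : (((k : ℕ) : Fin (m + 2)) : ℕ) = k := val_fc k (by omega)
    have hnl : ((k : ℕ) : Fin (m + 2)) ≠ Fin.last (m + 1) := ne_last_of_le hk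
    rw [Jfun, fc_add_one] at hX
    rw [jOf, if_neg hnl, hval]
    rcases lt_trichotomy (σ ((k : ℕ) : Fin (m + 2))) (σ ((k + 1 : ℕ) : Fin (m + 2))) with hlt | heq | hgt
    · rw [if_pos hlt] at hX
      constructor
      · constructor
        · intro hle; omega
        · intro hgt'; exact absurd hlt (lt_asymm hgt')
      · rw [if_neg (by omega)]; omega
    · exact absurd heq hne
    · rw [if_neg (lt_asymm hgt)] at hX
      constructor
      · constructor
        · intro _; exact hgt
        · intro _; omega
      · rw [if_pos (by omega)]; omega
  constructor
  · intro k hk; exact (key k hk).1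
  · funext q
    by_cases hq : q = Fin.last (m + 1)
    · rw [hq, jOf, if_pos rfl]
    · have hk : q.val ≤ m := by
        have := q.isLt
        have : q.val ≠ m + 1 := fun hc => hq (Fin.ext hc)
        omega
      have := (key q.val hk).2
      rwa [fc_val] at this

lemma Jfun_jOf (t : ℕ) (ht : t ∈ Tset i σ) (q : Fin (m + 2)) (hq : q ≠ Fin.last (m + 1)) :
    Jfun σ q (jOf i σ t q) = (t : ℤ) - sfun i σ q.val := by
  have hk : q.val ≤ m := by
    have := q.isLt
    have : q.val ≠ m + 1 := fun hc => hq (Fin.ext hc)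
    omega
  have hiff := ht q.val hk
  rw [fc_val] at hiff
  have hne := sigma_ne σ q
  have hq1 : q + 1 = ((q.val + 1 : ℕ) : Fin (m + 2)) := by
    conv_lhs => rw [← fc_val q]
    rw [fc_add_one]
  rw [Jfun, hq1, jOf, if_neg hq]
  rw [hq1] at hne
  rcases lt_trichotomy (σ q) (σ (((q.val + 1 : ℕ)) : Fin (m + 2))) with hlt | heq | hgt
  · have hnle : ¬ sfun i σ q.val ≤ (t : ℤ) := by
      intro hle
      exact absurd (hiff.mp hle) (lt_asymm hlt)
    rw [if_pos hlt, if_neg hnle]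
    omega
  · exact absurd heq hne
  · have hle : sfun i σ q.val ≤ (t : ℤ) := hiff.mpr hgt
    rw [if_neg (lt_asymm hgt), if_pos hle]
    omega

lemma backward (t : ℕ) (ht : t ∈ Tset i σ)
    (hσ : σ (Fin.last (m + 1)) = Fin.last (m + 1)) :
    (∀ q, q ≠ Fin.last (m + 1) → Kfun i σ (jOf i σ t) q = 0) ∧
      Kfun i σ (jOf i σ t) (Fin.last (m + 1)) = ∑ p, i p := by
  have hlast_sub : Fin.last (m + 1) - 1 = ((m : ℕ) : Fin (m + 2)) := by
    rw [← fc_last, ← fc_add_one, add_sub_cancel_right]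
  have hJlast : Jfun σ (Fin.last (m + 1)) (jOf i σ t (Fin.last (m + 1))) = (t : ℤ) := by
    rw [jOf, if_pos rfl, Jfun_last σ hσ]
  constructor
  · intro q hq
    have hJq := Jfun_jOf i σ t ht q hq
    rcases Nat.eq_zero_or_eq_succ_pred q.val with h0 | hsucc
    · have hq0 : q = 0 := Fin.ext (by simpa using h0)
      have hsub : q - 1 = Fin.last (m + 1) := by rw [hq0]; exact zero_sub_one_fin
      rw [Kfun, hsub, hJlast, hJq, h0, sfun_zero, hq0]
      omega
    · set k := q.val - 1 with hkdef
      have hqval : q.val = k + 1 := hsucc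
      have hk : k + 1 ≤ m := by
        have := q.isLt
        have : q.val ≠ m + 1 := fun hc => hq (Fin.ext hc)
        omega
      have hqfc : q = ((k + 1 : ℕ) : Fin (m + 2)) := by
        rw [← hqval, fc_val]
      have hsub : q - 1 = ((k : ℕ) : Fin (m + 2)) := by
        rw [hqfc, ← fc_add_one, add_sub_cancel_right]
      have hJprev := Jfun_jOf i σ t ht ((k : ℕ) : Fin (m + 2)) (ne_last_of_le (by omega))
      rw [val_fc k (by omega)] at hJprev
      rw [Kfun, hsub, hJprev, hJq, hqval, sfun_succ, ← hqfc]
      omega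
  · have hJprev := Jfun_jOf i σ t ht ((m : ℕ) : Fin (m + 2)) (ne_last_of_le (le_refl m))
    rw [val_fc m (by omega)] at hJprev
    have htot := sfun_total i σ
    rw [sfun_succ, fc_last, hσ] at htot
    rw [Kfun, hlast_sub, hJprev, hJlast, hσ]
    omega

lemma fc_lt_fc {a b : ℕ} (hab : a < b) (hb : b ≤ m + 1) :
    ((a : ℕ) : Fin (m + 2)) < ((b : ℕ) : Fin (m + 2)) := by
  rw [Fin.lt_def, val_fc a (by omega), val_fc b hb]; exact hab

lemma chain_dec (d : ℕ)
    (h : ∀ k, k < d → σ ((k + 1 : ℕ) : Fin (m + 2)) < σ ((k : ℕ) : Fin (m + 2))) :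
    ∀ a b : ℕ, a < b → b ≤ d → σ ((b : ℕ) : Fin (m + 2)) < σ ((a : ℕ) : Fin (m + 2)) := by
  intro a b
  induction b with
  | zero => omega
  | succ b ih =>
    intro hab hbd
    rcases Nat.lt_or_ge a b with h' | h'
    · exact lt_trans (h b (by omega)) (ih h' (by omega))
    · have : a = b := by omega
      rw [this]; exact h b (by omega)

lemma chain_inc (d : ℕ)
    (h : ∀ k, d ≤ k → k ≤ m → σ ((k : ℕ) : Fin (m + 2)) < σ ((k + 1 : ℕ) : Fin (m + 2))) :
    ∀ a b : ℕ, d ≤ a → a < b → b ≤ m + 1 →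
      σ ((a : ℕ) : Fin (m + 2)) < σ ((b : ℕ) : Fin (m + 2)) := by
  intro a b
  induction b with
  | zero => omega
  | succ b ih =>
    intro hda hab hbm
    rcases Nat.lt_or_ge a b with h' | h'
    · exact lt_trans (ih hda h' (by omega)) (h b (by omega) (by omega))
    · have : a = b := by omega
      rw [this]; exact h b (by omega) (by omega)

lemma Tset_lt_sfun_m (t : ℕ) (ht : t ∈ Tset i σ)
    (hσ : σ (Fin.last (m + 1)) = Fin.last (m + 1)) : (t : ℤ) < sfun i σ m := by
  by_contra hc
  have h1 := (ht m (le_refl m)).mp (by omega)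
  rw [fc_last, hσ] at h1
  exact absurd h1 (not_lt.mpr (Fin.le_last _))

lemma Tset_finite (hσ : σ (Fin.last (m + 1)) = Fin.last (m + 1)) : (Tset i σ).Finite := by
  apply Set.Finite.subset (Set.finite_Iio ((sfun i σ m).toNat))
  intro t ht
  have := Tset_lt_sfun_m i σ t ht hσ
  simp only [Set.mem_Iio]
  omega

lemma Tset_of_S2 (hi : ∀ p, 1 ≤ i p) (r : ℕ) (hr1 : 1 ≤ r) (hr2 : r ≤ m + 1)
    (hS : SPerm m r σ) :
    Tset i σ = Set.Ico (if m + 1 - r = 0 then 0 else (sfun i σ (m + 1 - r - 1)).toNat)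
      ((sfun i σ (m + 1 - r)).toNat) := by
  obtain ⟨-, hmin, hdec, hinc⟩ := hS
  set d := m + 1 - r with hd
  have hdm : d ≤ m := by omega
  -- descents at k < d, ascents at d ≤ k ≤ m
  have hdesc : ∀ k, k < d → σ ((k + 1 : ℕ) : Fin (m + 2)) < σ ((k : ℕ) : Fin (m + 2)) := by
    intro k hk
    exact hdec _ _ (fc_lt_fc (by omega) (by omega)) (by rw [val_fc (k+1) (by omega)]; omega)
  have hasc : ∀ k, d ≤ k → k ≤ m → σ ((k : ℕ) : Fin (m + 2)) < σ ((k + 1 : ℕ) : Fin (m + 2)) := by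
    intro k hk1 hk2
    exact hinc _ _ (by rw [val_fc k (by omega)]; omega) (fc_lt_fc (by omega) (by omega))
  ext t
  simp only [Set.mem_Ico, Tset, Set.mem_setOf_eq]
  constructor
  · intro ht
    constructor
    · split_ifs with h0
      · omega
      · have := (ht (d - 1) (by omega)).mpr (hdesc (d-1) (by omega))
        have hp := sfun_pos i σ hi (d-1)
        omega
    · have h2 := hasc d (le_refl d) hdm
      have h3 : ¬ sfun i σ d ≤ (t : ℤ) := by
        intro hle
        exact absurd ((ht d hdm).mp hle) (lt_asymm h2)
      have hp := sfun_pos i σ hi d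
      omega
  · intro ⟨h1, h2⟩ k hk
    rcases Nat.lt_or_ge k d with hkd | hkd
    · -- s k ≤ t and descent: both sides true
      have hmono : sfun i σ k ≤ sfun i σ (d - 1) := sfun_mono i σ hi (by omega)
      have hp := sfun_pos i σ hi (d-1)
      have hd0 : ¬ (d = 0) := by omega
      rw [if_neg hd0] at h1
      constructor
      · intro _; exact hdesc k hkd
      · intro _; omega
    · -- t < s k and ascent: both sides false
      have hmono : sfun i σ d ≤ sfun i σ k := sfun_mono i σ hi hkd
      have hp := sfun_pos i σ hi d
      constructor
      · intro hle; omega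
      · intro hgt; exact absurd (hasc k hkd hk) (lt_asymm hgt)

lemma S2_of_Tset (hi : ∀ p, 1 ≤ i p) (t : ℕ) (ht : t ∈ Tset i σ)
    (hσ : σ (Fin.last (m + 1)) = Fin.last (m + 1)) : inS2 m σ := by
  classical
  have hPt : (t : ℤ) < sfun i σ t := by have := sfun_pos i σ hi t; omega
  have hPm : (t : ℤ) < sfun i σ m := Tset_lt_sfun_m i σ t ht hσ
  set P : ℕ → Prop := fun k => (t : ℤ) < sfun i σ k with hP
  have hex : ∃ k, P k := ⟨t, hPt⟩
  set d := Nat.find hex with hddef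
  have hPd : (t : ℤ) < sfun i σ d := Nat.find_spec hex
  have hdm : d ≤ m := Nat.find_le hPm
  have hmin : ∀ k, k < d → sfun i σ k ≤ (t : ℤ) := by
    intro k hk
    have := Nat.find_min hex hk
    simp only [hP] at this
    omega
  have hdesc : ∀ k, k < d → σ ((k + 1 : ℕ) : Fin (m + 2)) < σ ((k : ℕ) : Fin (m + 2)) := by
    intro k hk
    exact (ht k (by omega)).mp (hmin k hk)
  have hasc : ∀ k, d ≤ k → k ≤ m → σ ((k : ℕ) : Fin (m + 2)) < σ ((k + 1 : ℕ) : Fin (m + 2)) := by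
    intro k hk1 hk2
    have hmono : sfun i σ d ≤ sfun i σ k := sfun_mono i σ hi hk1
    have hnotlt : ¬ σ ((k + 1 : ℕ) : Fin (m + 2)) < σ ((k : ℕ) : Fin (m + 2)) := by
      intro hlt
      have := (ht k hk2).mpr hlt
      omega
    have hne := sigma_ne σ ((k : ℕ) : Fin (m + 2))
    rw [fc_add_one] at hne
    rcases lt_trichotomy (σ ((k : ℕ) : Fin (m + 2))) (σ ((k + 1 : ℕ) : Fin (m + 2))) with h | h | h
    · exact h
    · exact absurd h hne
    · exact absurd h hnotlt
  have hdecC := chain_dec σ d hdesc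
  have hincC := chain_inc σ d hasc
  -- σ (fc d) = 0
  have hmin0 : σ ((d : ℕ) : Fin (m + 2)) = 0 := by
    set e := σ.symm 0 with he
    have hσe : σ e = 0 := σ.apply_symm_apply 0
    have hev : e = ((e.val : ℕ) : Fin (m + 2)) := (fc_val e).symm
    rcases lt_trichotomy e.val d with h | h | h
    · exfalso
      have := hdecC e.val d h (le_refl d)
      rw [← hev, hσe] at this
      exact absurd this (Fin.not_lt_zero _)
    · rw [← h, ← hev, hσe]
    · exfalso
      have := hincC d e.val (le_refl d) h (by omega)
      rw [← hev, hσe] at this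
      exact absurd this (Fin.not_lt_zero _)
  refine ⟨m + 1 - d, by omega, by omega, ?_, ?_, ?_, ?_⟩
  · exact hσ
  · have hdd : m + 1 - (m + 1 - d) = d := by omega
    have : (⟨m + 1 - (m + 1 - d), by omega⟩ : Fin (m + 2)) = ((d : ℕ) : Fin (m + 2)) := by
      apply Fin.ext
      rw [val_fc d (by omega)]
      simpa using hdd
    rw [this, hmin0]
    rfl
  · intro a b hab hbd
    have := hdecC a.val b.val (Fin.lt_def.mp hab) (by omega)
    rwa [fc_val, fc_val] at this
  · intro a b hda hab
    have := hincC a.val b.val (by omega) (Fin.lt_def.mp hab) (by omega)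
    rwa [fc_val, fc_val] at this

end Aux

/-- Counting fact used in the proof of Theorem 1.1 (paper `n = m+2 ≥ 2`): for `σ(n) = n`,
the number of `j ∈ (ℤ_{≥0})^n` with `K_{i,σ,q}(j) = 0` for `1 ≤ q ≤ n−1` and
`K_{i,σ,n}(j) = i_1+⋯+i_n` is `i_1` if `σ ∈ S_n^{{2}}` and `0` otherwise. -/
theorem count_solutions_case1 (m : ℕ) (i : Fin (m + 2) → ℤ) (hi : ∀ p, 1 ≤ i p)
    (σ : Equiv.Perm (Fin (m + 2))) (hσ : σ (Fin.last (m + 1)) = Fin.last (m + 1)) :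
    {j : Fin (m + 2) → ℕ | (∀ q, q ≠ Fin.last (m + 1) → Kfun i σ j q = 0) ∧
        Kfun i σ j (Fin.last (m + 1)) = ∑ p, i p}.Finite ∧
      (inS2 m σ →
        (({j : Fin (m + 2) → ℕ | (∀ q, q ≠ Fin.last (m + 1) → Kfun i σ j q = 0) ∧
            Kfun i σ j (Fin.last (m + 1)) = ∑ p, i p}.ncard : ℤ) = i 0)) ∧
      (¬ inS2 m σ →
        ({j : Fin (m + 2) → ℕ | (∀ q, q ≠ Fin.last (m + 1) → Kfun i σ j q = 0) ∧
            Kfun i σ j (Fin.last (m + 1)) = ∑ p, i p}.ncard = 0)) := by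
  classical
  set A := {j : Fin (m + 2) → ℕ | (∀ q, q ≠ Fin.last (m + 1) → Kfun i σ j q = 0) ∧
      Kfun i σ j (Fin.last (m + 1)) = ∑ p, i p} with hA
  have hAeq : A = jOf i σ '' Tset i σ := by
    ext j
    simp only [hA, Set.mem_setOf_eq, Set.mem_image]
    constructor
    · rintro ⟨h1, _⟩
      obtain ⟨ht, hj⟩ := forward i σ j hσ h1
      exact ⟨j (Fin.last (m + 1)), ht, hj.symm⟩
    · rintro ⟨t, ht, rfl⟩
      exact backward i σ t ht hσ
  have hinj : Set.InjOn (jOf i σ) (Tset i σ) := by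
    intro t _ t' _ h
    have := congrFun h (Fin.last (m + 1))
    simpa [jOf] using this
  have hfin : A.Finite := by
    rw [hAeq]; exact (Tset_finite i σ hσ).image _
  have hcard : A.ncard = (Tset i σ).ncard := by
    rw [hAeq]; exact Set.ncard_image_of_injOn hinj
  refine ⟨hfin, ?_, ?_⟩
  · rintro ⟨r, hr1, hr2, hS⟩
    rw [hcard, Tset_of_S2 i σ hi r hr1 hr2 hS]
    have hico : ∀ a b : ℕ, (Set.Ico a b).ncard = b - a := by
      intro a b
      rw [← Finset.coe_Ico, Set.ncard_coe_finset, Nat.card_Ico]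
    rw [hico]
    set d := m + 1 - r with hd
    have hdm : d ≤ m := by omega
    have hval : i (σ ((d : ℕ) : Fin (m + 2))) = i 0 := by
      have h2 := hS.2.1
      have he1 : (⟨m + 1 - r, by omega⟩ : Fin (m + 2)) = ((d : ℕ) : Fin (m + 2)) := by
        apply Fin.ext
        rw [val_fc d (by omega)]
      have he2 : (⟨0, by omega⟩ : Fin (m + 2)) = 0 := rfl
      rw [he1, he2] at h2
      rw [h2]
    have h1 : (1 : ℤ) ≤ i 0 := hi 0
    rcases Nat.eq_zero_or_pos d with h0 | h0
    · rw [if_pos h0]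
      have h00 : ((0 : ℕ) : Fin (m + 2)) = 0 := by norm_num
      have hz : sfun i σ d = i 0 := by
        rw [h0] at hval ⊢
        rw [sfun_zero]
        nth_rewrite 1 [← h00]
        exact hval
      omega
    · rw [if_neg (by omega)]
      have hsucc := sfun_succ i σ (d - 1)
      rw [show d - 1 + 1 = d by omega] at hsucc
      have hp := sfun_pos i σ hi (d - 1)
      omega
  · intro hnot
    rw [hcard]
    have hempty : Tset i σ = ∅ := by
      ext t
      simp only [Set.mem_empty_iff_false, iff_false]
      intro ht
      exact hnot (S2_of_Tset i σ hi t ht hσ)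
    rw [hempty, Set.ncard_empty]
end
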